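/- If w ∈ S_n is vexillary (avoids the pattern 2143), then the essential set E(w) is totally ordered under the relation (i,j) ≼ (i',j') iff i ≥ i' and j ≤ j'; that is, for any two elements (i,j), (i',j') of E(w), either (i ≥ i' and j ≤ j') or (i ≤ i' and j ≥ j'). -/

import Mathlib

/-- Rank function of a permutation (0-indexed): `r_w(i,j) = #{a ≤ i : w(a) ≤ j}`. -/
def rk {n : ℕ} (w : Equiv.Perm (Fin n)) (i j : Fin n) : ℕ :=
  (Finset.univ.filter (fun a : Fin n => a ≤ i ∧ w a ≤ j)).card

/-- Membership in the Rothe diagram `D(w)`. -/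
def inD {n : ℕ} (w : Equiv.Perm (Fin n)) (i j : Fin n) : Prop :=
  j < w i ∧ i < w.symm j

/-- Membership in Fulton's essential set `E(w)`. -/
def inEss {n : ℕ} (w : Equiv.Perm (Fin n)) (i j : Fin n) : Prop :=
  inD w i j ∧ (∀ i' : Fin n, (i' : ℕ) = (i : ℕ) + 1 → ¬ inD w i' j) ∧
    (∀ j' : Fin n, (j' : ℕ) = (j : ℕ) + 1 → ¬ inD w i j')

/-- `w` contains the pattern `v`. -/
def containsPattern {n m : ℕ} (w : Equiv.Perm (Fin n)) (v : Equiv.Perm (Fin m)) : Prop :=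
  ∃ f : Fin m → Fin n, StrictMono f ∧ ∀ a b : Fin m, v a < v b ↔ w (f a) < w (f b)

/-- The pattern `1243` as a permutation of `Fin 4` (0-indexed one-line notation `0 1 3 2`). -/
def p1243 : Equiv.Perm (Fin 4) := Equiv.swap 2 3

/-- The pattern `2143` as a permutation of `Fin 4` (0-indexed one-line notation `1 0 3 2`). -/
def p2143 : Equiv.Perm (Fin 4) := Equiv.swap 0 1 * Equiv.swap 2 3

/-- The permutation of `S_{k+2}` with one-line notation `v(1) … v(k) (k+2) (k+1)`. -/
def pat {k : ℕ} (v : Equiv.Perm (Fin k)) : Equiv.Perm (Fin (k + 2)) :=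
  finSumFinEquiv.symm.trans ((Equiv.sumCongr v (Equiv.swap 0 1)).trans finSumFinEquiv)

/-- Two essential cells with `(i,j)` strictly northwest of `(i',j')` yield a `2143` pattern. -/
lemma key {n : ℕ} (w : Equiv.Perm (Fin n)) (i j i' j' : Fin n)
    (hE : inEss w i j) (hE' : inEss w i' j' ) (hii : i < i') (hjj : j < j') :
    containsPattern w p2143 := by
  obtain ⟨⟨hji, hiw⟩, hR, hC⟩ := hE
  obtain ⟨⟨hji', hiw'⟩, _, _⟩ := hE'
  have hi1 : (i : ℕ) + 1 < n := lt_of_le_of_lt hiw (w.symm j).isLt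
  have hj1 : (j : ℕ) + 1 < n := lt_of_le_of_lt hji (w i).isLt
  set i1 : Fin n := ⟨(i : ℕ) + 1, hi1⟩ with hi1def
  set j1 : Fin n := ⟨(j : ℕ) + 1, hj1⟩ with hj1def
  have hwi1 : w i1 ≤ j := by
    have hnd := hR i1 rfl
    rw [inD, not_and_or] at hnd
    rcases hnd with hnd | hnd
    · exact not_lt.mp hnd
    · have : w.symm j = i1 := le_antisymm (not_lt.mp hnd) hiw
      have : w i1 = j := by rw [← this, Equiv.apply_symm_apply]
      exact this.le
  have hwj1 : w.symm j1 ≤ i := by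
    have hnd := hC j1 rfl
    rw [inD, not_and_or] at hnd
    rcases hnd with hnd | hnd
    · have : w i = j1 := le_antisymm (not_lt.mp hnd) hji
      have : w.symm j1 = i := by rw [← this, Equiv.symm_apply_apply]
      exact this.le
    · exact not_lt.mp hnd
  have hii1 : i1 < i' := by
    rcases lt_or_ge i1 i' with h | h
    · exact h
    · exfalso
      have : i' = i1 := le_antisymm h hii
      rw [this] at hji'
      exact absurd (lt_of_le_of_lt hwi1 hjj) (not_lt.mpr hji'.le)
  have hjj1 : j1 < j' := by
    rcases lt_or_ge j1 j' with h | h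
    · exact h
    · exfalso
      have he : j' = j1 := le_antisymm h hjj
      rw [he] at hiw'
      exact absurd (lt_of_le_of_lt hwj1 (lt_trans hii hiw')) (lt_irrefl _)
  set r0 : Fin n := w.symm j1
  set r1 : Fin n := i1
  set r2 : Fin n := i'
  set r3 : Fin n := w.symm j'
  have h01 : r0 < r1 := lt_of_le_of_lt hwj1 (by exact Fin.lt_def.mpr (Nat.lt_succ_self _))
  have h12 : r1 < r2 := hii1
  have h23 : r2 < r3 := hiw'
  have hv0 : w r0 = j1 := Equiv.apply_symm_apply w j1
  have hv3 : w r3 = j' := Equiv.apply_symm_apply w j'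
  have k1 : w r1 < w r0 := by
    rw [hv0]; exact lt_of_le_of_lt hwi1 (Fin.lt_def.mpr (Nat.lt_succ_self _))
  have k2 : w r0 < w r3 := by rw [hv0, hv3]; exact hjj1
  have k3 : w r3 < w r2 := by rw [hv3]; exact hji'
  refine ⟨![r0, r1, r2, r3], ?_, ?_⟩
  · intro a b hab
    fin_cases a <;> fin_cases b <;> simp at hab ⊢ <;>
      first
        | exact h01 | exact h12 | exact h23
        | exact lt_trans h01 h12 | exact lt_trans h12 h23
        | exact lt_trans h01 (lt_trans h12 h23)
  · intro a b
    fin_cases a <;> fin_cases b <;>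
      simp [p2143, Equiv.swap_apply_def] <;>
      first
        | exact k1 | exact k2 | exact k3
        | exact lt_trans k1 k2 | exact lt_trans k2 k3
        | exact lt_trans k1 (lt_trans k2 k3)
        | exact le_of_lt k1 | exact le_of_lt k2 | exact le_of_lt k3
        | exact le_of_lt (lt_trans k1 k2) | exact le_of_lt (lt_trans k2 k3)
        | exact le_of_lt (lt_trans k1 (lt_trans k2 k3))

/-- If `w` is vexillary, `E(w)` is totally ordered southwest-to-northeast. -/
theorem stmt5 (n : ℕ) (w : Equiv.Perm (Fin n)) (h : ¬ containsPattern w p2143) :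
    ∀ i j i' j' : Fin n, inEss w i j → inEss w i' j' →
      (i' ≤ i ∧ j ≤ j') ∨ (i ≤ i' ∧ j' ≤ j) := by
  intro i j i' j' hE hE'
  rcases lt_trichotomy i i' with hlt | heq | hgt
  · rcases le_or_gt j' j with h2 | h2
    · exact Or.inr ⟨hlt.le, h2⟩
    · exact absurd (key w i j i' j' hE hE' hlt h2) h
  · rcases le_total j j' with h2 | h2
    · exact Or.inl ⟨heq.ge, h2⟩
    · exact Or.inr ⟨heq.le, h2⟩
  · rcases le_or_gt j j' with h2 | h2
    · exact Or.inl ⟨hgt.le, h2⟩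
    · exact absurd (key w i' j' i j hE' hE hgt h2) h
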